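/- Let λ₀, b, V₀, u₁ > 0 and let g be a density on [0,b], bounded, continuous at b with g(b) > 0. Define E(t) = u₁·V₀·e^{λ₀ t} ∫₀^b g(x)·(e^{tx}-1)/x dx (the mean number of type-1 cells at time t). Then E(t) ∼ (V₀·u₁·g(b)/(b·t))·e^{(λ₀+b)t} as t → ∞. -/

import Mathlib

open Real MeasureTheory Filter
open scoped Topology

private lemma exp_sub_one_le_aux (s : ℝ) : Real.exp s - 1 ≤ s * Real.exp s := by
  have h1 := Real.add_one_le_exp (-s)
  have h2 : Real.exp (-s) * Real.exp s = 1 := by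
    rw [← Real.exp_add]; simp
  nlinarith [Real.exp_pos s, Real.exp_pos (-s)]

theorem stmt_5 (lam0 b V0 u1 G : ℝ) (hlam0 : 0 < lam0) (hb : 0 < b)
    (hV0 : 0 < V0) (hu1 : 0 < u1)
    (g : ℝ → ℝ) (hmeas : Measurable g)
    (hbdd : ∀ x ∈ Set.Icc 0 b, 0 ≤ g x ∧ g x ≤ G)
    (hdens : ∫ x in (0:ℝ)..b, g x = 1)
    (hcont : ContinuousWithinAt g (Set.Icc 0 b) b)
    (hgb : 0 < g b) :
    Tendsto (fun t : ℝ =>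
        (u1 * V0 * Real.exp (lam0 * t) *
            ∫ x in (0:ℝ)..b, g x * (Real.exp (t * x) - 1) / x) /
          ((V0 * u1 * g b / (b * t)) * Real.exp ((lam0 + b) * t)))
      atTop (nhds 1) := by
  have hbIcc : b ∈ Set.Icc (0:ℝ) b := ⟨hb.le, le_rfl⟩
  have hG : 0 < G := lt_of_lt_of_le hgb (hbdd b hbIcc).2
  -- pointwise bound for the integrand
  have key : ∀ t : ℝ, 0 ≤ t → ∀ q : ℝ, q ≤ b → ∀ x ∈ Set.Ioc (0:ℝ) q,
      |g x * (Real.exp (t * x) - 1) / x| ≤ G * (t * Real.exp (t * q)) := by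
    intro t ht q hq x hx
    obtain ⟨hx0, hxq⟩ := hx
    have hxb : x ≤ b := hxq.trans hq
    obtain ⟨hg0, hgG⟩ := hbdd x ⟨hx0.le, hxb⟩
    have he0 : 0 ≤ Real.exp (t * x) - 1 := by
      nlinarith [Real.add_one_le_exp (t * x), mul_nonneg ht hx0.le]
    have he1 : Real.exp (t * x) - 1 ≤ (t * x) * Real.exp (t * x) := exp_sub_one_le_aux _
    have hmono : Real.exp (t * x) ≤ Real.exp (t * q) :=
      Real.exp_le_exp.2 (mul_le_mul_of_nonneg_left hxq ht)
    have hdiv : (Real.exp (t * x) - 1) / x ≤ t * Real.exp (t * q) := by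
      rw [div_le_iff₀ hx0]
      nlinarith [Real.exp_pos (t * x), mul_nonneg ht hx0.le]
    have hnn : 0 ≤ g x * (Real.exp (t * x) - 1) / x :=
      div_nonneg (mul_nonneg hg0 he0) hx0.le
    rw [abs_of_nonneg hnn]
    calc g x * (Real.exp (t * x) - 1) / x = g x * ((Real.exp (t * x) - 1) / x) := by
          rw [mul_div_assoc]
      _ ≤ G * (t * Real.exp (t * q)) :=
          mul_le_mul hgG hdiv (div_nonneg he0 hx0.le) hG.le
  -- interval integrability
  have hInt : ∀ t : ℝ, 0 ≤ t → ∀ p q : ℝ, 0 ≤ p → p ≤ q → q ≤ b →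
      IntervalIntegrable (fun x => g x * (Real.exp (t * x) - 1) / x) volume p q := by
    intro t ht p q hp hpq hqb
    rw [intervalIntegrable_iff, Set.uIoc_of_le hpq]
    apply Integrable.mono' (integrable_const (G * (t * Real.exp (t * b))))
      (((hmeas.mul (((measurable_id.const_mul t).exp).sub measurable_const)).div
        measurable_id).aestronglyMeasurable)
    filter_upwards [ae_restrict_mem measurableSet_Ioc] with x hx
    rw [Real.norm_eq_abs]
    exact key t ht b le_rfl x ⟨lt_of_le_of_lt hp hx.1, hx.2.trans hqb⟩
  -- Part A : contribution of [0, b/2] tends to 0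
  have hc : (0:ℝ) < b / 2 := half_pos hb
  have hA : Tendsto (fun t : ℝ =>
      t * Real.exp (-(b * t)) * ∫ x in (0:ℝ)..(b/2), g x * (Real.exp (t * x) - 1) / x)
      atTop (𝓝 0) := by
    apply squeeze_zero_norm'
      (a := fun t : ℝ => (G * (b/2) * (2/b)^2) * ((t * (b/2))^2 * Real.exp (-(t * (b/2)))))
    · filter_upwards [eventually_ge_atTop (0:ℝ)] with t ht
      have hbound := intervalIntegral.norm_integral_le_of_norm_le_const
        (C := G * (t * Real.exp (t * (b/2))))
        (f := fun x => g x * (Real.exp (t * x) - 1) / x) (a := 0) (b := b/2)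
        (fun x hx => by
          rw [Set.uIoc_of_le hc.le] at hx
          rw [Real.norm_eq_abs]
          exact key t ht (b/2) (by linarith) x hx)
      rw [Real.norm_eq_abs, abs_mul, abs_mul, abs_of_nonneg ht,
        abs_of_nonneg (Real.exp_pos _).le]
      have h1 : t * Real.exp (-(b * t)) *
          |∫ x in (0:ℝ)..(b/2), g x * (Real.exp (t * x) - 1) / x| ≤
          t * Real.exp (-(b * t)) * (G * (t * Real.exp (t * (b/2))) * |b/2 - 0|) := by
        apply mul_le_mul_of_nonneg_left _ (by positivity)
        simpa [Real.norm_eq_abs] using hbound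
      refine h1.trans (le_of_eq ?_)
      rw [abs_of_nonneg (by linarith : (0:ℝ) ≤ b/2 - 0)]
      have hexp : Real.exp (-(b * t)) * Real.exp (t * (b/2)) = Real.exp (-(t * (b/2))) := by
        rw [← Real.exp_add]; congr 1; ring
      calc t * Real.exp (-(b * t)) * (G * (t * Real.exp (t * (b/2))) * (b/2 - 0)) =
            G * (b/2) * (t^2 * (Real.exp (-(b * t)) * Real.exp (t * (b/2)))) := by ring
        _ = G * (b/2) * (t^2 * Real.exp (-(t * (b/2)))) := by rw [hexp]
        _ = (G * (b/2) * (2/b)^2) * ((t * (b/2))^2 * Real.exp (-(t * (b/2)))) := by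
            field_simp
    · have h0 : Tendsto (fun t : ℝ => t * (b/2)) atTop atTop :=
        tendsto_id.atTop_mul_const hc
      have h1 := (tendsto_pow_mul_exp_neg_atTop_nhds_zero 2).comp h0
      have h2 := h1.const_mul (G * (b/2) * (2/b)^2)
      simpa using h2
  -- Part B : dominated convergence for the substituted integral
  have hB : Tendsto (fun t : ℝ => ∫ v in Set.Ioi (0:ℝ),
      Set.indicator (Set.Ioc 0 (t * (b/2)))
        (fun v => g (b - v * t⁻¹) * (Real.exp (-v) - Real.exp (-(t * b))) / (b - v * t⁻¹)) v)
      atTop (𝓝 (g b / b)) := by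
    have hlim_int : (∫ v in Set.Ioi (0:ℝ), g b * Real.exp (-v) / b) = g b / b := by
      have h : (fun v : ℝ => g b * Real.exp (-v) / b) =
          fun v => (g b / b) * Real.exp (-v) := by funext v; ring
      rw [h, MeasureTheory.integral_const_mul, integral_exp_neg_Ioi_zero, mul_one]
    rw [← hlim_int]
    apply tendsto_integral_filter_of_dominated_convergence
      (bound := fun v => (2 * G / b) * Real.exp (-v))
    · filter_upwards [eventually_ge_atTop (1:ℝ)] with t ht
      have haff : Measurable (fun v : ℝ => b - v * t⁻¹) :=
        measurable_const.sub (measurable_id.mul_const _)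
      exact ((((hmeas.comp haff).mul
        ((measurable_neg.exp).sub measurable_const)).div haff).indicator
        measurableSet_Ioc).aestronglyMeasurable
    · filter_upwards [eventually_ge_atTop (1:ℝ)] with t ht
      have ht0 : (0:ℝ) < t := by linarith
      filter_upwards [ae_restrict_mem measurableSet_Ioi] with v hv
      by_cases hvmem : v ∈ Set.Ioc (0:ℝ) (t * (b/2))
      · rw [Set.indicator_of_mem hvmem]
        have hvt : 0 < v * t⁻¹ := mul_pos hvmem.1 (inv_pos.2 ht0)
        have hle : v * t⁻¹ ≤ b / 2 := by
          rw [show v * t⁻¹ = v / t from by ring, div_le_iff₀ ht0]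
          nlinarith [hvmem.2]
        have hx1 : b / 2 ≤ b - v * t⁻¹ := by linarith
        have hx2 : b - v * t⁻¹ < b := by linarith
        obtain ⟨hg0, hgG⟩ := hbdd (b - v * t⁻¹) ⟨by linarith, hx2.le⟩
        have hvtb : v ≤ t * b := by nlinarith [hvmem.2]
        have hd0 : 0 ≤ Real.exp (-v) - Real.exp (-(t * b)) := by
          have := Real.exp_le_exp.2 (by linarith : -(t * b) ≤ -v)
          linarith
        have hd1 : Real.exp (-v) - Real.exp (-(t * b)) ≤ Real.exp (-v) := by
          have := (Real.exp_pos (-(t * b))).le; linarith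
        have hxpos : 0 < b - v * t⁻¹ := lt_of_lt_of_le hc hx1
        rw [Real.norm_eq_abs, abs_of_nonneg (div_nonneg (mul_nonneg hg0 hd0) hxpos.le)]
        calc g (b - v * t⁻¹) * (Real.exp (-v) - Real.exp (-(t * b))) / (b - v * t⁻¹)
            ≤ G * Real.exp (-v) / (b / 2) :=
              div_le_div₀ (by positivity) (mul_le_mul hgG hd1 hd0 hG.le) hc hx1
          _ = 2 * G / b * Real.exp (-v) := by field_simp
      · rw [Set.indicator_of_notMem hvmem, norm_zero]
        positivity
    · have h := (exp_neg_integrableOn_Ioi 0 one_pos).const_mul (2 * G / b)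
      simpa [neg_one_mul] using h
    · filter_upwards [ae_restrict_mem measurableSet_Ioi] with v hv
      have hv0 : 0 < v := hv
      have hx : Tendsto (fun t : ℝ => b - v * t⁻¹) atTop (𝓝 b) := by
        have h0 : Tendsto (fun t : ℝ => v * t⁻¹) atTop (𝓝 0) := by
          simpa using tendsto_inv_atTop_zero.const_mul v
        simpa using tendsto_const_nhds.sub h0
      have hxW : Tendsto (fun t : ℝ => b - v * t⁻¹) atTop (𝓝[Set.Icc 0 b] b) := by
        rw [tendsto_nhdsWithin_iff]
        refine ⟨hx, ?_⟩
        filter_upwards [eventually_ge_atTop (max 1 (v / b))] with t ht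
        have ht1 : (1:ℝ) ≤ t := le_trans (le_max_left _ _) ht
        have ht0 : (0:ℝ) < t := by linarith
        have h2 : v / b ≤ t := le_trans (le_max_right _ _) ht
        have hub : v * t⁻¹ ≤ b := by
          rw [show v * t⁻¹ = v / t from by ring, div_le_iff₀ ht0]
          have : v = (v / b) * b := by field_simp
          nlinarith
        have hlb : 0 ≤ v * t⁻¹ := by positivity
        exact ⟨by linarith, by linarith⟩
      have hg' : Tendsto (fun t : ℝ => g (b - v * t⁻¹)) atTop (𝓝 (g b)) :=
        hcont.tendsto.comp hxW
      have hexp2 : Tendsto (fun t : ℝ => Real.exp (-v) - Real.exp (-(t * b))) atTop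
          (𝓝 (Real.exp (-v))) := by
        have h1 : Tendsto (fun t : ℝ => -(t * b)) atTop atBot :=
          tendsto_neg_atTop_atBot.comp (tendsto_id.atTop_mul_const hb)
        have h2 := Real.tendsto_exp_atBot.comp h1
        simpa using tendsto_const_nhds.sub h2
      have hlim : Tendsto (fun t : ℝ =>
          g (b - v * t⁻¹) * (Real.exp (-v) - Real.exp (-(t * b))) / (b - v * t⁻¹)) atTop
          (𝓝 (g b * Real.exp (-v) / b)) := (hg'.mul hexp2).div hx hb.ne'
      refine Tendsto.congr' ?_ hlim
      filter_upwards [eventually_ge_atTop (max 1 (2 * v / b))] with t ht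
      have ht1 : (1:ℝ) ≤ t := le_trans (le_max_left _ _) ht
      have h2 : 2 * v / b ≤ t := le_trans (le_max_right _ _) ht
      have hvmem : v ∈ Set.Ioc (0:ℝ) (t * (b/2)) := by
        refine ⟨hv0, ?_⟩
        have : 2 * v = (2 * v / b) * b := by field_simp
        nlinarith
      rw [Set.indicator_of_mem hvmem]
  -- combine A and B
  have hF : Tendsto (fun t : ℝ =>
      t * Real.exp (-(b * t)) * ∫ x in (0:ℝ)..b, g x * (Real.exp (t * x) - 1) / x)
      atTop (𝓝 (g b / b)) := by
    have hsum := hA.add hB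
    rw [zero_add] at hsum
    refine Tendsto.congr' ?_ hsum
    filter_upwards [eventually_ge_atTop (1:ℝ)] with t ht
    have ht0 : (0:ℝ) < t := by linarith
    have hsplit : (∫ x in (0:ℝ)..b, g x * (Real.exp (t * x) - 1) / x) =
        (∫ x in (0:ℝ)..(b/2), g x * (Real.exp (t * x) - 1) / x) +
        ∫ x in (b/2)..b, g x * (Real.exp (t * x) - 1) / x :=
      (intervalIntegral.integral_add_adjacent_intervals
        (hInt t ht0.le 0 (b/2) le_rfl hc.le (by linarith))
        (hInt t ht0.le (b/2) b hc.le (by linarith) le_rfl)).symm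
    have hsub : (∫ v in (0:ℝ)..(t * (b/2)),
        g (b - v * t⁻¹) * (Real.exp (t * (b - v * t⁻¹)) - 1) / (b - v * t⁻¹)) =
        t * ∫ x in (b/2)..b, g x * (Real.exp (t * x) - 1) / x := by
      calc (∫ v in (0:ℝ)..(t * (b/2)),
            g (b - v * t⁻¹) * (Real.exp (t * (b - v * t⁻¹)) - 1) / (b - v * t⁻¹))
          = (t⁻¹)⁻¹ • ∫ u in (0 * t⁻¹)..(t * (b/2) * t⁻¹),
              g (b - u) * (Real.exp (t * (b - u)) - 1) / (b - u) :=
            intervalIntegral.integral_comp_mul_right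
              (fun u => g (b - u) * (Real.exp (t * (b - u)) - 1) / (b - u))
              (inv_ne_zero ht0.ne')
        _ = t * ∫ u in (0:ℝ)..(b/2), g (b - u) * (Real.exp (t * (b - u)) - 1) / (b - u) := by
            rw [inv_inv, smul_eq_mul, zero_mul,
              show t * (b/2) * t⁻¹ = b/2 from by field_simp]
        _ = t * ∫ x in (b/2)..b, g x * (Real.exp (t * x) - 1) / x := by
            rw [intervalIntegral.integral_comp_sub_left
              (fun x => g x * (Real.exp (t * x) - 1) / x) b,
              show b - b/2 = b/2 from by ring, sub_zero]
    have hmain : Real.exp (-(b * t)) * ∫ v in (0:ℝ)..(t * (b/2)),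
        g (b - v * t⁻¹) * (Real.exp (t * (b - v * t⁻¹)) - 1) / (b - v * t⁻¹)
        = ∫ v in Set.Ioi (0:ℝ), Set.indicator (Set.Ioc 0 (t * (b/2)))
            (fun v => g (b - v * t⁻¹) * (Real.exp (-v) - Real.exp (-(t * b))) /
              (b - v * t⁻¹)) v := by
      rw [← intervalIntegral.integral_const_mul]
      have hcongr : ∀ v : ℝ, Real.exp (-(b * t)) *
          (g (b - v * t⁻¹) * (Real.exp (t * (b - v * t⁻¹)) - 1) / (b - v * t⁻¹)) =
          g (b - v * t⁻¹) * (Real.exp (-v) - Real.exp (-(t * b))) / (b - v * t⁻¹) := by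
        intro v
        have h2 : Real.exp (-(b * t)) * Real.exp (t * (b - v * t⁻¹)) = Real.exp (-v) := by
          rw [← Real.exp_add]; congr 1; field_simp; ring
        have h3 : Real.exp (-(b * t)) = Real.exp (-(t * b)) := by ring_nf
        calc Real.exp (-(b * t)) *
              (g (b - v * t⁻¹) * (Real.exp (t * (b - v * t⁻¹)) - 1) / (b - v * t⁻¹)) =
            g (b - v * t⁻¹) * (Real.exp (-(b * t)) * Real.exp (t * (b - v * t⁻¹)) -
              Real.exp (-(b * t))) / (b - v * t⁻¹) := by ring
          _ = _ := by rw [h2, h3]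
      simp only [hcongr]
      rw [intervalIntegral.integral_of_le (by positivity : (0:ℝ) ≤ t * (b/2)),
        setIntegral_indicator measurableSet_Ioc,
        Set.inter_eq_self_of_subset_right Set.Ioc_subset_Ioi_self]
    show _ = t * Real.exp (-(b * t)) * ∫ x in (0:ℝ)..b, g x * (Real.exp (t * x) - 1) / x
    rw [hsplit, mul_add]
    congr 1
    rw [← hmain, hsub]
    ring
  -- final algebra
  have hfinal := hF.mul_const (b / g b)
  have hval : g b / b * (b / g b) = 1 := by field_simp
  rw [hval] at hfinal
  refine Tendsto.congr' ?_ hfinal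
  filter_upwards [eventually_ge_atTop (1:ℝ)] with t ht
  have ht0 : (0:ℝ) < t := by linarith
  have hexp : Real.exp ((lam0 + b) * t) = Real.exp (lam0 * t) * Real.exp (b * t) := by
    rw [← Real.exp_add]; congr 1; ring
  have hen : Real.exp (-(b * t)) = (Real.exp (b * t))⁻¹ := Real.exp_neg _
  show (t * Real.exp (-(b * t)) * ∫ x in (0:ℝ)..b, g x * (Real.exp (t * x) - 1) / x) *
      (b / g b) = _
  rw [hexp, hen]
  field_simp
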